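/- arXiv:2210.11634 — 5 statements merged into one kernel-verified Lean document; each statement's English description precedes it below -/
import Mathlib

section
/- Let v_i, c_i, v_j, c_j be positive reals with v_i/c_i^2 > v_j/c_j^2 and v_i/c_i < v_j/c_j. If there exists C_o > 0 with v_i/(c_i(c_i + C_o)) < v_j/(c_j(c_j + C_o)), then for every C > C_o it holds that v_i/(c_i(c_i + C)) < v_j/(c_j(c_j + C)). -/
theorem stmt_2 (vi ci vj cj : ℝ) (hvi : 0 < vi) (hci : 0 < ci) (hvj : 0 < vj) (hcj : 0 < cj)
    (h1 : vi / ci ^ 2 > vj / cj ^ 2) (h2 : vi / ci < vj / cj)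
    (Co : ℝ) (hCo : 0 < Co)
    (h3 : vi / (ci * (ci + Co)) < vj / (cj * (cj + Co))) :
    ∀ C : ℝ, Co < C → vi / (ci * (ci + C)) < vj / (cj * (cj + C)) := by
  intro C hC
  have hCpos : 0 < C := hCo.trans hC
  rw [div_lt_div_iff₀ (by positivity) (by positivity)] at h3 ⊢
  rw [div_lt_div_iff₀ hci hcj] at h2
  nlinarith [mul_pos (sub_pos.2 hC) (sub_pos.2 h2)]
end

section
/- For positive reals v_i, c_i, v_j, c_j with v_i/c_i^2 ≥ v_j/c_j^2 and v_i/c_i ≥ v_j/c_j, the inequality v_i/(c_i(c_i + C)) ≥ v_j/(c_j(c_j + C)) holds for every C ≥ 0. -/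
theorem stmt_3 (vi ci vj cj : ℝ) (hvi : 0 < vi) (hci : 0 < ci) (hvj : 0 < vj) (hcj : 0 < cj)
    (h1 : vi / ci ^ 2 ≥ vj / cj ^ 2) (h2 : vi / ci ≥ vj / cj) :
    ∀ C : ℝ, 0 ≤ C → vi / (ci * (ci + C)) ≥ vj / (cj * (cj + C)) := by
  intro C hC
  have hcC : 0 < ci + C := by linarith
  have hcC' : 0 < cj + C := by linarith
  rw [ge_iff_le, div_le_div_iff₀ (by positivity) (by positivity)]
  rw [ge_iff_le, div_le_div_iff₀ (by positivity) (by positivity)] at h1 h2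
  nlinarith [mul_nonneg (sub_nonneg.mpr h2) hC, sq_nonneg ci, sq_nonneg cj]
end

section
/- Let v_i, c_i, v_j, c_j be positive reals with v_i/c_i^2 > v_j/c_j^2 and v_i/c_i < v_j/c_j, and set C* = (v_i c_j^2 − v_j c_i^2)/(v_j c_i − v_i c_j). Then C* > 0, and v_i/(c_i(c_i + C)) ≥ v_j/(c_j(c_j + C)) for all C in [0, C*), while v_i/(c_i(c_i + C)) < v_j/(c_j(c_j + C)) for all C > C*. -/
theorem stmt_4 (vi ci vj cj : ℝ) (hvi : 0 < vi) (hci : 0 < ci) (hvj : 0 < vj) (hcj : 0 < cj)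
    (h1 : vi / ci ^ 2 > vj / cj ^ 2) (h2 : vi / ci < vj / cj) :
    0 < (vi * cj ^ 2 - vj * ci ^ 2) / (vj * ci - vi * cj) ∧
    (∀ C : ℝ, 0 ≤ C → C < (vi * cj ^ 2 - vj * ci ^ 2) / (vj * ci - vi * cj) →
      vi / (ci * (ci + C)) ≥ vj / (cj * (cj + C))) ∧
    (∀ C : ℝ, (vi * cj ^ 2 - vj * ci ^ 2) / (vj * ci - vi * cj) < C →
      vi / (ci * (ci + C)) < vj / (cj * (cj + C))) := by
  have hD : 0 < vj * ci - vi * cj := by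
    rw [div_lt_div_iff₀ hci hcj] at h2; linarith
  have hN : 0 < vi * cj ^ 2 - vj * ci ^ 2 := by
    rw [gt_iff_lt, div_lt_div_iff₀ (by positivity) (by positivity)] at h1; nlinarith
  have hC : 0 < (vi * cj ^ 2 - vj * ci ^ 2) / (vj * ci - vi * cj) := div_pos hN hD
  refine ⟨hC, ?_, ?_⟩
  · intro C hC0 hCl
    rw [lt_div_iff₀ hD] at hCl
    rw [ge_iff_le, div_le_div_iff₀ (by positivity) (by positivity)]
    nlinarith
  · intro C hCl
    have hC0 : 0 < C := lt_trans hC hCl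
    rw [div_lt_iff₀ hD] at hCl
    rw [div_lt_div_iff₀ (by positivity) (by positivity)]
    nlinarith
end

section
/- Let v_i, c_i, v_j, c_j and C_o be positive reals. Then v_j/(c_j + c_i + C_o) + v_i/(c_i + C_o) > v_i/(c_i + c_j + C_o) + v_j/(c_j + C_o) if and only if v_i/(c_i(c_i + C_o)) > v_j/(c_j(c_j + C_o)). -/
theorem stmt_16 (vi ci vj cj Co : ℝ) (hvi : 0 < vi) (hci : 0 < ci) (hvj : 0 < vj)
    (hcj : 0 < cj) (hCo : 0 < Co) :
    (vj / (cj + ci + Co) + vi / (ci + Co) > vi / (ci + cj + Co) + vj / (cj + Co))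
      ↔ (vi / (ci * (ci + Co)) > vj / (cj * (cj + Co))) := by
  have h1 : 0 < ci + Co := by linarith
  have h2 : 0 < cj + Co := by linarith
  have h3 : 0 < ci + cj + Co := by linarith
  have h4 : 0 < cj + ci + Co := by linarith
  rw [gt_iff_lt, gt_iff_lt,
    div_add_div _ _ (ne_of_gt h3) (ne_of_gt h2),
    div_add_div _ _ (ne_of_gt h4) (ne_of_gt h1),
    div_lt_div_iff₀ (by positivity) (by positivity),
    div_lt_div_iff₀ (by positivity) (by positivity)]
  constructor <;> intro h <;> nlinarith [mul_pos h1 h2, mul_pos hci hcj, mul_pos hvi hvj,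
    mul_pos (mul_pos h1 h2) h3, mul_pos hci h2, mul_pos hcj h1, sq_nonneg (ci - cj),
    mul_pos hCo h3]
end

section
/- Let v_1, c_1, v_2, c_2, v_3, c_3 be positive reals and suppose v_4/(c_4(c_4 + c_1 + c_3)) > v_2/(c_2(c_2 + c_1 + c_3)) and v_2/(c_2(2c_2 + c_3)) > v_1/(c_1(c_1 + c_2 + c_3)), where additionally v_4/c_4^2 < v_2/c_2^2, v_4/c_4 > v_2/c_2, and c_1 + c_3 < c_2 + c_3 (i.e. c_1 < c_2). Then v_4/(c_4(c_4 + c_2 + c_3)) > v_1/(c_1(c_1 + c_2 + c_3)). -/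
theorem stmt_18 (v1 c1 v2 c2 v3 c3 v4 c4 : ℝ)
    (hv1 : 0 < v1) (hc1 : 0 < c1) (hv2 : 0 < v2) (hc2 : 0 < c2)
    (hv3 : 0 < v3) (hc3 : 0 < c3) (hv4 : 0 < v4) (hc4 : 0 < c4)
    (h1 : v4 / (c4 * (c4 + c1 + c3)) > v2 / (c2 * (c2 + c1 + c3)))
    (h2 : v2 / (c2 * (2 * c2 + c3)) > v1 / (c1 * (c1 + c2 + c3)))
    (h3 : v4 / c4 ^ 2 < v2 / c2 ^ 2) (h4 : v4 / c4 > v2 / c2)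
    (h5 : c1 + c3 < c2 + c3) :
    v4 / (c4 * (c4 + c2 + c3)) > v1 / (c1 * (c1 + c2 + c3)) := by
  have hd1 : 0 < c4 * (c4 + c1 + c3) := by positivity
  have hd2 : 0 < c2 * (c2 + c1 + c3) := by positivity
  have hd3 : 0 < c4 * (c4 + c2 + c3) := by positivity
  have hd4 : 0 < c2 * (2 * c2 + c3) := by positivity
  rw [gt_iff_lt, div_lt_div_iff₀ hd2 hd1] at h1
  rw [gt_iff_lt, div_lt_div_iff₀ hc2 hc4] at h4
  have key : v2 / (c2 * (2 * c2 + c3)) < v4 / (c4 * (c4 + c2 + c3)) := by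
    rw [div_lt_div_iff₀ hd4 hd3]
    nlinarith [mul_pos hv2 hc4, mul_pos hv4 hc2, h5,
      mul_lt_mul_of_pos_left h5 (sub_pos.mpr h4)]
  exact lt_trans h2 key
end
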